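/- Let H = ℂ² ⊗ ℂ² ⊗ ℂ² with the induced inner product, let |0⟩, |1⟩ be the standard orthonormal basis of ℂ², and let GHZ = |0⟩⊗|0⟩⊗|0⟩ + |1⟩⊗|1⟩⊗|1⟩. Then the set S_GHZ of normalized vectors of the form (A ⊗ B ⊗ C)·GHZ / ‖(A ⊗ B ⊗ C)·GHZ‖, where A, B, C range over invertible 2×2 complex matrices, is dense in the unit sphere of H: for every unit vector ψ ∈ H and every δ > 0 there exist invertible A, B, C with ‖ψ − (A ⊗ B ⊗ C)·GHZ / ‖(A ⊗ B ⊗ C)·GHZ‖‖ < δ. Consequently E(ψ, S_GHZ) = 1 − sup_{φ∈S_GHZ} |⟨ψ, φ⟩|² = 0 for every unit vector ψ. -/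

import Mathlib

open scoped InnerProductSpace

/-- The three-qubit Hilbert space `ℂ² ⊗ ℂ² ⊗ ℂ²`, modelled concretely as
`EuclideanSpace ℂ (Fin 2 × Fin 2 × Fin 2)` via the standard product basis. -/
noncomputable abbrev ThreeQubits := EuclideanSpace ℂ (Fin 2 × Fin 2 × Fin 2)

/-- The (unnormalized) GHZ state `|000⟩ + |111⟩`. -/
noncomputable def ghz : ThreeQubits :=
  EuclideanSpace.single (0, 0, 0) 1 + EuclideanSpace.single (1, 1, 1) 1

/-- The matrix of the local operator `A ⊗ B ⊗ C` in the product basis. -/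
noncomputable def kron3 (A B C : Matrix (Fin 2) (Fin 2) ℂ) :
    Matrix (Fin 2 × Fin 2 × Fin 2) (Fin 2 × Fin 2 × Fin 2) ℂ :=
  fun x y => A x.1 y.1 * B x.2.1 y.2.1 * C x.2.2 y.2.2

/-- The action of the local operator `A ⊗ B ⊗ C` on a three-qubit state. -/
noncomputable def applyKron3 (A B C : Matrix (Fin 2) (Fin 2) ℂ) (ψ : ThreeQubits) :
    ThreeQubits :=
  (WithLp.equiv 2 _).symm ((kron3 A B C).mulVec ((WithLp.equiv 2 _) ψ))

/-- The set `S_GHZ`: all normalized images `(A ⊗ B ⊗ C)·GHZ / ‖(A ⊗ B ⊗ C)·GHZ‖` of the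
GHZ state under invertible local operators. -/
noncomputable def ghzClass : Set ThreeQubits :=
  {φ | ∃ A B C : Matrix (Fin 2) (Fin 2) ℂ, IsUnit A ∧ IsUnit B ∧ IsUnit C ∧
    φ = ‖applyKron3 A B C ghz‖⁻¹ • applyKron3 A B C ghz}

/- ### Auxiliary lemmas -/

/-- rank-1 factorization of a singular 2×2 matrix given by entries. -/
lemma ghzAux_rank1 (a b c d : ℂ) (h : a * d = b * c) :
    ∃ v w : Fin 2 → ℂ, a = v 0 * w 0 ∧ b = v 0 * w 1 ∧ c = v 1 * w 0 ∧ d = v 1 * w 1 := by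
  by_cases ha : a = 0
  · by_cases hb : b = 0
    · exact ⟨![0, 1], ![c, d], by simp [ha], by simp [hb], by simp, by simp⟩
    · have hc : c = 0 := by
        rw [ha, zero_mul] at h
        rcases mul_eq_zero.mp h.symm with h' | h'
        · exact absurd h' hb
        · exact h'
      exact ⟨![b, d], ![0, 1], by simp [ha], by simp, by simp [hc], by simp⟩
  · refine ⟨![a, c], ![1, b / a], by simp, ?_, by simp, ?_⟩
    · simp only [Matrix.cons_val_zero, Matrix.cons_val_one, Matrix.head_cons]
      field_simp
    · simp only [Matrix.cons_val_zero, Matrix.cons_val_one, Matrix.head_cons]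
      field_simp
      linear_combination h

/-- **GHZ normal form.** A 2×2×2 tensor with invertible second slice and
nonvanishing discriminant of the pencil is a GHZ-type tensor. -/
lemma ghzAux_key (t000 t001 t010 t011 t100 t101 t110 t111 : ℂ)
    (hd0 : t100 * t111 - t101 * t110 ≠ 0)
    (hdisc : (t000 * t111 + t100 * t011 - t001 * t110 - t101 * t010) ^ 2
        - 4 * (t000 * t011 - t001 * t010) * (t100 * t111 - t101 * t110) ≠ 0) :
    ∃ A B C : Matrix (Fin 2) (Fin 2) ℂ, IsUnit A ∧ IsUnit B ∧ IsUnit C ∧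
      (A 0 0 * B 0 0 * C 0 0 + A 0 1 * B 0 1 * C 0 1 = t000) ∧
      (A 0 0 * B 0 0 * C 1 0 + A 0 1 * B 0 1 * C 1 1 = t001) ∧
      (A 0 0 * B 1 0 * C 0 0 + A 0 1 * B 1 1 * C 0 1 = t010) ∧
      (A 0 0 * B 1 0 * C 1 0 + A 0 1 * B 1 1 * C 1 1 = t011) ∧
      (A 1 0 * B 0 0 * C 0 0 + A 1 1 * B 0 1 * C 0 1 = t100) ∧
      (A 1 0 * B 0 0 * C 1 0 + A 1 1 * B 0 1 * C 1 1 = t101) ∧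
      (A 1 0 * B 1 0 * C 0 0 + A 1 1 * B 1 1 * C 0 1 = t110) ∧
      (A 1 0 * B 1 0 * C 1 0 + A 1 1 * B 1 1 * C 1 1 = t111) := by
  obtain ⟨d, hd⟩ : ∃ d : ℂ, d = t100 * t111 - t101 * t110 := ⟨_, rfl⟩
  obtain ⟨p, hp⟩ : ∃ p : ℂ, p = t000 * t111 + t100 * t011 - t001 * t110 - t101 * t010 := ⟨_, rfl⟩
  obtain ⟨q, hq⟩ : ∃ q : ℂ, q = t000 * t011 - t001 * t010 := ⟨_, rfl⟩
  have hd0' : d ≠ 0 := by rw [hd]; exact hd0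
  obtain ⟨δ, hδ⟩ := IsAlgClosed.exists_pow_nat_eq (p ^ 2 - 4 * q * d) (n := 2) (by norm_num)
  have hdisc' : p ^ 2 - 4 * q * d ≠ 0 := by rw [hp, hq, hd]; exact hdisc
  have hδ0 : δ ≠ 0 := by
    intro h; exact hdisc' (by rw [← hδ, h]; ring)
  obtain ⟨l0, hl0⟩ : ∃ l0 : ℂ, l0 = (p - δ) / (2 * d) := ⟨_, rfl⟩
  obtain ⟨l1, hl1⟩ : ∃ l1 : ℂ, l1 = (p + δ) / (2 * d) := ⟨_, rfl⟩
  obtain ⟨s, hs'⟩ : ∃ s : ℂ, s = d / δ := ⟨_, rfl⟩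
  have hs0 : s ≠ 0 := by rw [hs']; exact div_ne_zero hd0' hδ0
  have hs : s * (l1 - l0) = 1 := by
    rw [hs', hl0, hl1]; field_simp; ring
  have hsing0 : (t000 - l0 * t100) * (t011 - l0 * t111)
      = (t001 - l0 * t101) * (t010 - l0 * t110) := by
    rw [hl0]; field_simp
    linear_combination (-(4*d^2))*hq + (2*d*(p-δ))*hp + (-((p-δ)^2))*hd + d*hδ
  have hsing1 : (t000 - l1 * t100) * (t011 - l1 * t111)
      = (t001 - l1 * t101) * (t010 - l1 * t110) := by
    rw [hl1]; field_simp
    linear_combination (-(4*d^2))*hq + (2*d*(p+δ))*hp + (-((p+δ)^2))*hd + d*hδ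
  obtain ⟨v, w, hv00, hv01, hv10, hv11⟩ :=
    ghzAux_rank1 (t000 - l0 * t100) (t001 - l0 * t101) (t010 - l0 * t110) (t011 - l0 * t111) hsing0
  obtain ⟨v', w', hw00, hw01, hw10, hw11⟩ :=
    ghzAux_rank1 (t000 - l1 * t100) (t001 - l1 * t101) (t010 - l1 * t110) (t011 - l1 * t111) hsing1
  have e00 : t100 = s * (v 0 * w 0) - s * (v' 0 * w' 0) := by
    linear_combination s * hv00 + (-s) * hw00 + (-t100) * hs
  have e01 : t101 = s * (v 0 * w 1) - s * (v' 0 * w' 1) := by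
    linear_combination s * hv01 + (-s) * hw01 + (-t101) * hs
  have e10 : t110 = s * (v 1 * w 0) - s * (v' 1 * w' 0) := by
    linear_combination s * hv10 + (-s) * hw10 + (-t110) * hs
  have e11 : t111 = s * (v 1 * w 1) - s * (v' 1 * w' 1) := by
    linear_combination s * hv11 + (-s) * hw11 + (-t111) * hs
  have hkey : d = -(s ^ 2) * ((v 0 * v' 1 - v 1 * v' 0) * (w 0 * w' 1 - w 1 * w' 0)) := by
    rw [hd, e00, e01, e10, e11]; ring
  have hB0 : v 0 * v' 1 - v 1 * v' 0 ≠ 0 := by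
    intro h; apply hd0'; rw [hkey, h]; ring
  have hC0 : w 0 * w' 1 - w 1 * w' 0 ≠ 0 := by
    intro h; apply hd0'; rw [hkey, h]; ring
  refine ⟨!![s * l1, -(s * l0); s, -s], !![v 0, v' 0; v 1, v' 1], !![w 0, w' 0; w 1, w' 1],
    ?_, ?_, ?_, ?_, ?_, ?_, ?_, ?_, ?_, ?_, ?_⟩
  · rw [Matrix.isUnit_iff_isUnit_det, Matrix.det_fin_two_of, isUnit_iff_ne_zero]
    have : s * l1 * -s - -(s * l0) * s = -s := by linear_combination (-s) * hs
    rw [this]; exact neg_ne_zero.mpr hs0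
  · rw [Matrix.isUnit_iff_isUnit_det, Matrix.det_fin_two_of, isUnit_iff_ne_zero]
    intro h; exact hB0 (by linear_combination h)
  · rw [Matrix.isUnit_iff_isUnit_det, Matrix.det_fin_two_of, isUnit_iff_ne_zero]
    intro h; exact hC0 (by linear_combination h)
  all_goals simp only [Matrix.of_apply, Matrix.cons_val', Matrix.cons_val_zero,
    Matrix.cons_val_one, Matrix.head_cons, Matrix.empty_val', Matrix.cons_val_fin_one,
    Matrix.head_fin_const]
  · linear_combination (-(s * l1)) * hv00 + (s * l0) * hw00 + t000 * hs
  · linear_combination (-(s * l1)) * hv01 + (s * l0) * hw01 + t001 * hs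
  · linear_combination (-(s * l1)) * hv10 + (s * l0) * hw10 + t010 * hs
  · linear_combination (-(s * l1)) * hv11 + (s * l0) * hw11 + t011 * hs
  · linear_combination (-s) * hv00 + s * hw00 + t100 * hs
  · linear_combination (-s) * hv01 + s * hw01 + t101 * hs
  · linear_combination (-s) * hv10 + s * hw10 + t110 * hs
  · linear_combination (-s) * hv11 + s * hw11 + t111 * hs

lemma ghzAux_applyKron3_ghz_apply (A B C : Matrix (Fin 2) (Fin 2) ℂ)
    (x : Fin 2 × Fin 2 × Fin 2) :
    applyKron3 A B C ghz x
      = A x.1 0 * B x.2.1 0 * C x.2.2 0 + A x.1 1 * B x.2.1 1 * C x.2.2 1 := by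
  obtain ⟨i, j, k⟩ := x
  simp [applyKron3, ghz, kron3, Matrix.mulVec, dotProduct, Fintype.sum_prod_type,
    Fin.sum_univ_two, EuclideanSpace.single_apply, Prod.ext_iff]

/-- Bridge: any tensor with invertible slice and nonzero discriminant is exactly the image
of the GHZ state under invertible local operators. -/
lemma ghzAux_bridge (t : ThreeQubits)
    (hD : t (1,0,0) * t (1,1,1) - t (1,0,1) * t (1,1,0) ≠ 0)
    (hQ : (t (0,0,0) * t (1,1,1) + t (1,0,0) * t (0,1,1)
          - t (0,0,1) * t (1,1,0) - t (1,0,1) * t (0,1,0)) ^ 2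
        - 4 * (t (0,0,0) * t (0,1,1) - t (0,0,1) * t (0,1,0))
            * (t (1,0,0) * t (1,1,1) - t (1,0,1) * t (1,1,0)) ≠ 0) :
    ∃ A B C : Matrix (Fin 2) (Fin 2) ℂ, IsUnit A ∧ IsUnit B ∧ IsUnit C ∧
      applyKron3 A B C ghz = t := by
  obtain ⟨A, B, C, hA, hB, hC, h000, h001, h010, h011, h100, h101, h110, h111⟩ :=
    ghzAux_key (t (0,0,0)) (t (0,0,1)) (t (0,1,0)) (t (0,1,1))
      (t (1,0,0)) (t (1,0,1)) (t (1,1,0)) (t (1,1,1)) hD hQ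
  refine ⟨A, B, C, hA, hB, hC, ?_⟩
  apply (WithLp.equiv 2 (Fin 2 × Fin 2 × Fin 2 → ℂ)).injective
  funext x
  show applyKron3 A B C ghz x = t x
  rw [ghzAux_applyKron3_ghz_apply]
  obtain ⟨i, j, k⟩ := x
  revert i j k
  simp only [Fin.forall_fin_two]
  exact ⟨⟨⟨h000, h001⟩, h010, h011⟩, ⟨h100, h101⟩, h110, h111⟩

/-- The auxiliary generic state used as the endpoint of complex lines. -/
noncomputable def ghzAux_g : ThreeQubits :=
  (WithLp.equiv 2 _).symm fun x =>
    if x = (0,0,0) then 1 else if x = (0,1,1) then 1 else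
    if x = (1,0,0) then 1 else if x = (1,1,1) then 2 else 0

/-- Density of tensors with invertible slice and nonzero discriminant. -/
lemma ghzAux_dense (ψ : ThreeQubits) (ε : ℝ) (hε : 0 < ε) :
    ∃ t : ThreeQubits, ‖ψ - t‖ < ε ∧
      (t (1,0,0) * t (1,1,1) - t (1,0,1) * t (1,1,0) ≠ 0) ∧
      ((t (0,0,0) * t (1,1,1) + t (1,0,0) * t (0,1,1)
          - t (0,0,1) * t (1,1,0) - t (1,0,1) * t (0,1,0)) ^ 2
        - 4 * (t (0,0,0) * t (0,1,1) - t (0,0,1) * t (0,1,0))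
            * (t (1,0,0) * t (1,1,1) - t (1,0,1) * t (1,1,0)) ≠ 0) := by
  obtain ⟨c, hc⟩ : ∃ c : ThreeQubits, c = ghzAux_g - ψ := ⟨_, rfl⟩
  have hcx : ∀ x, c x = ghzAux_g x - ψ x := by
    intro x; rw [hc]; simp [PiLp.sub_apply]
  obtain ⟨h, hh⟩ : ∃ h : ℂ → ℂ, h = fun z : ℂ =>
      ((ψ (1,0,0) + z * c (1,0,0)) * (ψ (1,1,1) + z * c (1,1,1))
        - (ψ (1,0,1) + z * c (1,0,1)) * (ψ (1,1,0) + z * c (1,1,0))) *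
      (((ψ (0,0,0) + z * c (0,0,0)) * (ψ (1,1,1) + z * c (1,1,1))
          + (ψ (1,0,0) + z * c (1,0,0)) * (ψ (0,1,1) + z * c (0,1,1))
          - (ψ (0,0,1) + z * c (0,0,1)) * (ψ (1,1,0) + z * c (1,1,0))
          - (ψ (1,0,1) + z * c (1,0,1)) * (ψ (0,1,0) + z * c (0,1,0))) ^ 2
        - 4 * ((ψ (0,0,0) + z * c (0,0,0)) * (ψ (0,1,1) + z * c (0,1,1))
            - (ψ (0,0,1) + z * c (0,0,1)) * (ψ (0,1,0) + z * c (0,1,0)))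
          * ((ψ (1,0,0) + z * c (1,0,0)) * (ψ (1,1,1) + z * c (1,1,1))
            - (ψ (1,0,1) + z * c (1,0,1)) * (ψ (1,1,0) + z * c (1,1,0)))) := ⟨_, rfl⟩
  have hdiff : Differentiable ℂ h := by rw [hh]; fun_prop
  have h1 : h 1 = 2 := by
    rw [hh]
    simp only [hcx]
    have hg : ∀ x, (ghzAux_g : ThreeQubits) x =
        (if x = ((0:Fin 2),(0:Fin 2),(0:Fin 2)) then 1 else if x = (0,1,1) then 1 else
          if x = (1,0,0) then 1 else if x = (1,1,1) then (2:ℂ) else 0) := fun x => rfl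
    simp only [hg]
    norm_num [Prod.ext_iff]
  have hc1 : (0:ℝ) < ‖c‖ + 1 := by positivity
  have hrpos : 0 < ε / (‖c‖ + 1) := by positivity
  have hz : ∃ z : ℂ, ‖z‖ < ε / (‖c‖ + 1) ∧ h z ≠ 0 := by
    by_contra hcon
    push_neg at hcon
    have hA : AnalyticOnNhd ℂ h Set.univ := Complex.analyticOnNhd_univ_iff_differentiable.mpr hdiff
    have hev : h =ᶠ[nhds (0:ℂ)] 0 := by
      filter_upwards [Metric.ball_mem_nhds (0:ℂ) hrpos] with y hy
      exact hcon y (by simpa [dist_eq_norm] using hy)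
    have h10 := hA.eqOn_zero_of_preconnected_of_eventuallyEq_zero
      isPreconnected_univ (Set.mem_univ (0:ℂ)) hev (Set.mem_univ (1:ℂ))
    rw [h1] at h10
    simp at h10
  obtain ⟨z, hzr, hz0⟩ := hz
  rw [hh] at hz0
  have happ : ∀ x, (ψ + z • c) x = ψ x + z * c x := by
    intro x; simp [PiLp.add_apply, PiLp.smul_apply]
  refine ⟨ψ + z • c, ?_, ?_, ?_⟩
  · have hsub : ψ - (ψ + z • c) = -(z • c) := by abel
    rw [hsub, norm_neg, norm_smul]
    calc ‖z‖ * ‖c‖ ≤ ‖z‖ * (‖c‖ + 1) := by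
          exact mul_le_mul_of_nonneg_left (by linarith) (norm_nonneg z)
      _ < (ε / (‖c‖ + 1)) * (‖c‖ + 1) := by
          exact mul_lt_mul_of_pos_right hzr hc1
      _ = ε := by field_simp
  · simp only [happ]
    exact left_ne_zero_of_mul hz0
  · simp only [happ]
    exact right_ne_zero_of_mul hz0

/-- **Density of the GHZ class.** The set `S_GHZ` of normalized images of the GHZ state
under invertible local operators is dense in the unit sphere of the three-qubit space:
every unit vector `ψ` is within `δ` of some such state.  Consequently
`E(ψ, S_GHZ) = 1 - sup_{φ ∈ S_GHZ} |⟨ψ,φ⟩|² = 0` for every unit vector `ψ`. -/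
theorem ghzClass_dense_and_measure_zero :
    (∀ ψ : ThreeQubits, ‖ψ‖ = 1 → ∀ δ > (0 : ℝ),
      ∃ A B C : Matrix (Fin 2) (Fin 2) ℂ, IsUnit A ∧ IsUnit B ∧ IsUnit C ∧
        ‖ψ - ‖applyKron3 A B C ghz‖⁻¹ • applyKron3 A B C ghz‖ < δ) ∧
    (∀ ψ : ThreeQubits, ‖ψ‖ = 1 →
      1 - (⨆ φ : ghzClass, ‖⟪ψ, (φ : ThreeQubits)⟫_ℂ‖ ^ 2) = 0) := by
  have main : ∀ ψ : ThreeQubits, ‖ψ‖ = 1 → ∀ δ > (0 : ℝ),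
      ∃ A B C : Matrix (Fin 2) (Fin 2) ℂ, IsUnit A ∧ IsUnit B ∧ IsUnit C ∧
        ‖ψ - ‖applyKron3 A B C ghz‖⁻¹ • applyKron3 A B C ghz‖ < δ := by
    intro ψ hψ δ hδ
    obtain ⟨t, hlt, hD, hQ⟩ := ghzAux_dense ψ (δ / 2) (by positivity)
    obtain ⟨A, B, C, hA, hB, hC, heq⟩ := ghzAux_bridge t hD hQ
    have ht0 : t ≠ 0 := by
      intro h
      rw [h] at hD
      simp at hD
    have htn : (0:ℝ) < ‖t‖ := norm_pos_iff.mpr ht0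
    refine ⟨A, B, C, hA, hB, hC, ?_⟩
    rw [heq]
    have h2 : ‖t - ‖t‖⁻¹ • t‖ = |‖t‖ - 1| := by
      have : t - ‖t‖⁻¹ • t = (1 - ‖t‖⁻¹ : ℝ) • t := by
        rw [sub_smul, one_smul]
      rw [this, norm_smul, Real.norm_eq_abs, ← abs_of_pos htn, ← abs_mul]
      congr 1
      field_simp
      rw [abs_of_pos htn]; ring
    have h3 : |‖t‖ - 1| ≤ ‖t - ψ‖ := by
      have := abs_norm_sub_norm_le t ψ
      rwa [hψ] at this
    have h4 : ‖t - ψ‖ < δ / 2 := by rwa [norm_sub_rev] at hlt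
    calc ‖ψ - ‖t‖⁻¹ • t‖ ≤ ‖ψ - t‖ + ‖t - ‖t‖⁻¹ • t‖ := by
          have : ψ - ‖t‖⁻¹ • t = (ψ - t) + (t - ‖t‖⁻¹ • t) := by abel
          rw [this]; exact norm_add_le _ _
      _ < δ / 2 + δ / 2 := by
          apply add_lt_add_of_lt_of_le hlt
          calc ‖t - ‖t‖⁻¹ • t‖ = |‖t‖ - 1| := h2
            _ ≤ ‖t - ψ‖ := h3
            _ ≤ δ / 2 := le_of_lt h4
      _ = δ := by ring
  refine ⟨main, ?_⟩
  intro ψ hψ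
  haveI hne : Nonempty ghzClass :=
    ⟨⟨_, 1, 1, 1, isUnit_one, isUnit_one, isUnit_one, rfl⟩⟩
  have hnorm_le : ∀ φ : ThreeQubits, φ ∈ ghzClass → ‖φ‖ ≤ 1 := by
    rintro _ ⟨A, B, C, -, -, -, rfl⟩
    rw [norm_smul, Real.norm_eq_abs, abs_of_nonneg (by positivity)]
    rcases eq_or_ne ‖applyKron3 A B C ghz‖ 0 with h | h
    · rw [h]; simp
    · rw [inv_mul_cancel₀ h]
  have hval_le : ∀ φ : ghzClass, ‖⟪ψ, (φ : ThreeQubits)⟫_ℂ‖ ^ 2 ≤ 1 := by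
    intro φ
    have h1 : ‖⟪ψ, (φ : ThreeQubits)⟫_ℂ‖ ≤ 1 := by
      calc ‖⟪ψ, (φ : ThreeQubits)⟫_ℂ‖ ≤ ‖ψ‖ * ‖(φ : ThreeQubits)‖ := norm_inner_le_norm _ _
        _ = ‖(φ : ThreeQubits)‖ := by rw [hψ, one_mul]
        _ ≤ 1 := hnorm_le _ φ.2
    calc ‖⟪ψ, (φ : ThreeQubits)⟫_ℂ‖ ^ 2 ≤ 1 ^ 2 :=
          pow_le_pow_left₀ (norm_nonneg _) h1 2
      _ = 1 := one_pow 2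
  have hbdd : BddAbove (Set.range fun φ : ghzClass => ‖⟪ψ, (φ : ThreeQubits)⟫_ℂ‖ ^ 2) := by
    refine ⟨1, ?_⟩
    rintro _ ⟨φ, rfl⟩
    exact hval_le φ
  have hsup_le : (⨆ φ : ghzClass, ‖⟪ψ, (φ : ThreeQubits)⟫_ℂ‖ ^ 2) ≤ 1 := ciSup_le hval_le
  have hle_sup : (1:ℝ) ≤ ⨆ φ : ghzClass, ‖⟪ψ, (φ : ThreeQubits)⟫_ℂ‖ ^ 2 := by
    apply le_of_forall_pos_le_add
    intro ε hε
    obtain ⟨δ₀, hδ₀pos, hδ₀le1, hδ₀sq⟩ : ∃ δ₀ : ℝ, 0 < δ₀ ∧ δ₀ ≤ 1 ∧ δ₀ ^ 2 ≤ ε := by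
      refine ⟨min 1 (Real.sqrt ε), lt_min one_pos (Real.sqrt_pos.mpr hε), min_le_left _ _, ?_⟩
      calc (min 1 (Real.sqrt ε)) ^ 2 ≤ (Real.sqrt ε) ^ 2 :=
            pow_le_pow_left₀ (le_min zero_le_one (Real.sqrt_nonneg ε)) (min_le_right _ _) 2
        _ = ε := Real.sq_sqrt hε.le
    obtain ⟨A, B, C, hA, hB, hC, hlt⟩ := main ψ hψ δ₀ hδ₀pos
    set v := applyKron3 A B C ghz with hv
    set φ : ThreeQubits := ‖v‖⁻¹ • v with hφ
    have hmem : φ ∈ ghzClass := ⟨A, B, C, hA, hB, hC, rfl⟩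
    have hv0 : v ≠ 0 := by
      intro h
      rw [hφ, h] at hlt
      simp only [smul_zero, sub_zero, hψ] at hlt
      linarith
    have hφ1 : ‖φ‖ = 1 := by
      rw [hφ, norm_smul, Real.norm_eq_abs, abs_of_nonneg (by positivity),
        inv_mul_cancel₀ (norm_ne_zero_iff.mpr hv0)]
    have hre : 1 - δ₀ ^ 2 / 2 ≤ RCLike.re ⟪ψ, φ⟫_ℂ := by
      have hns := norm_sub_sq (𝕜 := ℂ) ψ φ
      rw [hψ, hφ1] at hns
      have hsq : ‖ψ - φ‖ ^ 2 < δ₀ ^ 2 := by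
        apply pow_lt_pow_left₀ hlt (norm_nonneg _)
        norm_num
      nlinarith [hns]
    have hre_norm : RCLike.re ⟪ψ, φ⟫_ℂ ≤ ‖⟪ψ, φ⟫_ℂ‖ := RCLike.re_le_norm _
    have hval : 1 - ε ≤ ‖⟪ψ, φ⟫_ℂ‖ ^ 2 := by
      have h0 : 0 ≤ (1:ℝ) - δ₀ ^ 2 / 2 := by nlinarith
      nlinarith [norm_nonneg (⟪ψ, φ⟫_ℂ)]
    have hle := le_ciSup hbdd (⟨φ, hmem⟩ : ghzClass)
    simp only at hle
    linarith
  linarith
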